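/- Let S be a numerical semigroup with multiplicity m = m(S). If the number of elements of S lying strictly between m and 2m is at least √(3m), then S satisfies Wilf's conjecture: |P(S)| · |L(S)| ≥ F(S) + 1, where P(S) is the set of primitives, L(S) = S ∩ [0, F(S)), and F(S) is the Frobenius number. -/
import Mathlib


/-- A numerical semigroup: a cofinite additive submonoid of ℕ containing 0. -/
structure NumericalSemigroup where
  carrier : Set ℕ
  zero_mem : 0 ∈ carrier
  add_mem : ∀ ⦃a b : ℕ⦄, a ∈ carrier → b ∈ carrier → a + b ∈ carrier
  cofinite : (carrierᶜ : Set ℕ).Finite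

namespace NumericalSemigroup

/-- The primitives (minimal generators): nonzero elements not expressible as a sum
of two nonzero elements. -/
def primitives (S : NumericalSemigroup) : Set ℕ :=
  {x | x ∈ S.carrier ∧ x ≠ 0 ∧
    ¬ ∃ a b : ℕ, a ∈ S.carrier ∧ b ∈ S.carrier ∧ a ≠ 0 ∧ b ≠ 0 ∧ x = a + b}

/-- The maximum primitive. -/
noncomputable def maxPrim (S : NumericalSemigroup) : ℕ := sSup (primitives S)

/-- The multiplicity: the least primitive (= least nonzero element). -/
noncomputable def multiplicity (S : NumericalSemigroup) : ℕ := sInf (primitives S)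

/-- The Frobenius number: the largest gap (0 for ℕ by convention here). -/
noncomputable def frob (S : NumericalSemigroup) : ℕ := sSup (S.carrierᶜ)

/-- The set of left elements. -/
noncomputable def lefts (S : NumericalSemigroup) : Set ℕ := S.carrier ∩ Set.Iio (frob S)

/-- The extended set of left elements. -/
noncomputable def extLefts (S : NumericalSemigroup) : Set ℕ := lefts S ∪ {frob S}

end NumericalSemigroup

open NumericalSemigroup

/-- The gcd of a set of naturals: the greatest common divisor of all its elements. -/
noncomputable def setGcd (A : Set ℕ) : ℕ := sSup {d | ∀ x ∈ A, d ∣ x}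

/-- The number of numerical semigroups with maximum primitive `n`. -/
noncomputable def countMaxPrim (n : ℕ) : ℕ :=
  {S : NumericalSemigroup | maxPrim S = n}.ncard

/-- The number of numerical semigroups with Frobenius number `n`. -/
noncomputable def countFrob (n : ℕ) : ℕ :=
  {S : NumericalSemigroup | frob S = n}.ncard


namespace Aux

open NumericalSemigroup

/-- basic structure facts about the multiplicity -/
lemma mult_spec (S : NumericalSemigroup) :
    multiplicity S ∈ S.carrier ∧ multiplicity S ≠ 0 ∧
      ∀ x ∈ S.carrier, x ≠ 0 → multiplicity S ≤ x := by
  have hinf : S.carrier.Infinite := by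
    have := S.cofinite.infinite_compl
    rwa [compl_compl] at this
  set T : Set ℕ := {x | x ∈ S.carrier ∧ x ≠ 0} with hT
  have hTne : T.Nonempty := by
    obtain ⟨x, hx⟩ := (hinf.diff (Set.finite_singleton 0)).nonempty
    exact ⟨x, hx.1, by simpa using hx.2⟩
  set m0 := sInf T with hm0
  have hm0T : m0 ∈ T := Nat.sInf_mem hTne
  have hm0le : ∀ x ∈ S.carrier, x ≠ 0 → m0 ≤ x := fun x hx hx0 => Nat.sInf_le ⟨hx, hx0⟩
  have hm0p : m0 ∈ primitives S := by
    refine ⟨hm0T.1, hm0T.2, ?_⟩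
    rintro ⟨a, b, ha, hb, ha0, hb0, hab⟩
    have h1 := hm0le a ha ha0
    have h2 := hm0le b hb hb0
    omega
  have hPT : primitives S ⊆ T := fun x hx => ⟨hx.1, hx.2.1⟩
  have heq : multiplicity S = m0 := by
    have h1 : multiplicity S ≤ m0 := Nat.sInf_le hm0p
    have h2 : m0 ≤ multiplicity S := by
      have hmem : multiplicity S ∈ primitives S := Nat.sInf_mem ⟨m0, hm0p⟩
      exact Nat.sInf_le (hPT hmem)
    omega
  rw [heq]
  exact ⟨hm0T.1, hm0T.2, hm0le⟩

lemma mul_mem (S : NumericalSemigroup) {x : ℕ} (hx : x ∈ S.carrier) (k : ℕ) :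
    k * x ∈ S.carrier := by
  induction k with
  | zero => simpa using S.zero_mem
  | succ n ih => rw [Nat.succ_mul]; exact S.add_mem ih hx

end Aux

theorem wilf_criterion (S : NumericalSemigroup)
    (h : Real.sqrt (3 * multiplicity S)
        ≤ ((S.carrier ∩ Set.Ioo (multiplicity S) (2 * multiplicity S)).ncard : ℝ)) :
    frob S + 1 ≤ (primitives S).ncard * (lefts S).ncard := by
  classical
  obtain ⟨hmS, hm0, hmle⟩ := Aux.mult_spec S
  set m := multiplicity S with hm
  set F := frob S with hF
  -- m ≥ 2
  have hm1 : m ≠ 1 := by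
    intro h1
    rw [h1] at h
    have he : S.carrier ∩ Set.Ioo (1:ℕ) (2*1) = ∅ := by
      ext x; simp only [Set.mem_inter_iff, Set.mem_Ioo, Set.mem_empty_iff_false, iff_false,
        not_and]
      intro _; omega
    rw [he] at h
    simp only [Set.ncard_empty, Nat.cast_zero] at h
    have hpos : (0:ℝ) < Real.sqrt (3 * (1:ℕ)) := by
      apply Real.sqrt_pos.mpr; norm_num
    linarith
  have hm2 : 2 ≤ m := by omega
  -- Frobenius facts
  have h1S : (1:ℕ) ∉ S.carrier := fun h1 => by have := hmle 1 h1 one_ne_zero; omega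
  have hcne : (S.carrierᶜ).Nonempty := ⟨1, h1S⟩
  have hFgap : F ∉ S.carrier := Nat.sSup_mem hcne S.cofinite.bddAbove
  have hFub : ∀ x, F < x → x ∈ S.carrier := by
    intro x hx
    by_contra hxS
    have hle : x ≤ F := le_csSup S.cofinite.bddAbove (show x ∈ S.carrierᶜ from hxS)
    omega
  have hF1 : 1 ≤ F := by
    exact le_csSup S.cofinite.bddAbove (show (1:ℕ) ∈ S.carrierᶜ from h1S)
  -- the count n and n^2 ≥ 3m
  set n := (S.carrier ∩ Set.Ioo m (2*m)).ncard with hn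
  have hn2 : 3*m ≤ n^2 := by
    have h0 : (0:ℝ) ≤ 3*(m:ℝ) := by positivity
    have h2 : (3*(m:ℝ)) ≤ (n:ℝ)^2 := by
      calc (3*(m:ℝ)) = (Real.sqrt (3*(m:ℝ)))^2 := (Real.sq_sqrt h0).symm
        _ ≤ (n:ℝ)^2 := by
            apply pow_le_pow_left₀ (Real.sqrt_nonneg _) h
    exact_mod_cast h2
  -- the set of small primitives
  have hAP : S.carrier ∩ Set.Ico m (2*m) ⊆ primitives S := by
    rintro x ⟨hx, hxI⟩
    rw [Set.mem_Ico] at hxI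
    refine ⟨hx, by omega, ?_⟩
    rintro ⟨u, v, hu, hv, hu0, hv0, rfl⟩
    have h1 := hmle u hu hu0
    have h2 := hmle v hv hv0
    omega
  have hA_fin : (S.carrier ∩ Set.Ico m (2*m)).Finite :=
    (Set.finite_Ico _ _).subset Set.inter_subset_right
  have hIoo_fin : (S.carrier ∩ Set.Ioo m (2*m)).Finite :=
    (Set.finite_Ioo _ _).subset Set.inter_subset_right
  have hIcoIoo : S.carrier ∩ Set.Ico m (2*m) = insert m (S.carrier ∩ Set.Ioo m (2*m)) := by
    ext x
    simp only [Set.mem_inter_iff, Set.mem_Ico, Set.mem_Ioo, Set.mem_insert_iff]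
    constructor
    · rintro ⟨hx, hx1, hx2⟩
      rcases eq_or_ne x m with rfl | hne
      · exact Or.inl rfl
      · exact Or.inr ⟨hx, by omega, hx2⟩
    · rintro (rfl | ⟨hx, hx1, hx2⟩)
      · exact ⟨hmS, le_refl _, by omega⟩
      · exact ⟨hx, by omega, hx2⟩
  have hcardA : (S.carrier ∩ Set.Ico m (2*m)).ncard = n + 1 := by
    rw [hIcoIoo, Set.ncard_insert_of_notMem ?_ hIoo_fin]
    rintro ⟨-, hmm, -⟩
    exact lt_irrefl m hmm
  -- primitives are finite and bounded
  have hPsub : primitives S ⊆ Set.Iic (F + m) := by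
    intro x hx
    by_contra hgt
    simp only [Set.mem_Iic, not_le] at hgt
    have hxm : x - m ∈ S.carrier := hFub _ (by omega)
    exact hx.2.2 ⟨m, x - m, hmS, hxm, by omega, by omega, by omega⟩
  have hPfin : (primitives S).Finite := (Set.finite_Iic _).subset hPsub
  have hLfin : (lefts S).Finite := (Set.finite_Iio F).subset Set.inter_subset_right
  have hPn : n + 1 ≤ (primitives S).ncard := by
    rw [← hcardA]
    exact Set.ncard_le_ncard hAP hPfin
  by_cases hbig : m < F
  · by_cases hdeep : F < 2*m
    · -- depth 2 case
      -- depth 2 case : m < F < 2m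
      set A : Set ℕ := S.carrier ∩ Set.Ico m F with hA
      have hAfin : A.Finite := (Set.finite_Ico _ _).subset Set.inter_subset_right
      set a := A.ncard with ha
      have hmA : m ∈ A := ⟨hmS, Set.mem_Ico.mpr ⟨le_refl _, hbig⟩⟩
      have ha1 : 1 ≤ a := by
        have : 0 < a := (Set.ncard_pos hAfin).mpr ⟨m, hmA⟩
        omega
      -- lefts = insert 0 A
      have hLeq : lefts S = insert 0 A := by
        ext x
        simp only [lefts, hA, Set.mem_inter_iff, Set.mem_Iio, Set.mem_insert_iff,
          Set.mem_Ico, ← hF]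
        constructor
        · rintro ⟨hx, hxF⟩
          rcases eq_or_ne x 0 with rfl | hx0
          · exact Or.inl rfl
          · exact Or.inr ⟨hx, hmle x hx hx0, hxF⟩
        · rintro (rfl | ⟨hx, hx1, hx2⟩)
          · exact ⟨S.zero_mem, by omega⟩
          · exact ⟨hx, hx2⟩
      have hLcard : (lefts S).ncard = a + 1 := by
        rw [hLeq, Set.ncard_insert_of_notMem ?_ hAfin]
        rintro ⟨-, h0, -⟩
        omega
      -- Finset version of A
      set Af := hAfin.toFinset with hAf
      have hAfcard : Af.card = a := (Set.ncard_eq_toFinset_card A hAfin).symm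
      have hAfmem : ∀ x, x ∈ Af ↔ x ∈ S.carrier ∧ m ≤ x ∧ x < F := by
        intro x
        rw [hAf, Set.Finite.mem_toFinset, hA]
        simp [Set.mem_Ico]
      -- non-primitives in (F, F+m] decompose as sums of two elements of A
      set D := (Finset.Ioc F (F+m)).filter (fun x => x ∉ primitives S) with hD
      have hdecomp : ∀ x ∈ D, ∃ p : ℕ × ℕ, p.1 ∈ Af ∧ p.2 ∈ Af ∧ x = p.1 + p.2 := by
        intro x hx
        rw [hD, Finset.mem_filter, Finset.mem_Ioc] at hx
        obtain ⟨⟨hx1, hx2⟩, hxP⟩ := hx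
        have hxS : x ∈ S.carrier := hFub x hx1
        have hex : ∃ u v : ℕ, u ∈ S.carrier ∧ v ∈ S.carrier ∧ u ≠ 0 ∧ v ≠ 0 ∧ x = u + v := by
          by_contra hne
          push_neg at hne
          refine hxP ⟨hxS, by omega, ?_⟩
          rintro ⟨u, v, hu, hv, hu0, hv0, huv⟩
          exact (hne u v hu hv hu0 hv0) huv
        obtain ⟨u, v, hu, hv, hu0, hv0, huv⟩ := hex
        have hum := hmle u hu hu0
        have hvm := hmle v hv hv0
        have huF : u < F := by
          have h1 : u ≤ F := by omega
          rcases Nat.lt_or_ge u F with h' | h'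
          · exact h'
          · exfalso; have : u = F := by omega
            rw [this] at hu; exact hFgap hu
        have hvF : v < F := by
          have h1 : v ≤ F := by omega
          rcases Nat.lt_or_ge v F with h' | h'
          · exact h'
          · exfalso; have : v = F := by omega
            rw [this] at hv; exact hFgap hv
        exact ⟨(u, v), (hAfmem u).mpr ⟨hu, hum, huF⟩, (hAfmem v).mpr ⟨hv, hvm, hvF⟩, huv⟩
      -- injection of D into Sym2 of Af
      have hdecomp' : ∀ x : ℕ, ∃ p : ℕ × ℕ, x ∈ D → (p.1 ∈ Af ∧ p.2 ∈ Af ∧ x = p.1 + p.2) := by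
        intro x
        by_cases hx : x ∈ D
        · obtain ⟨p, h1, h2, h3⟩ := hdecomp x hx
          exact ⟨p, fun _ => ⟨h1, h2, h3⟩⟩
        · exact ⟨(0, 0), fun hc => absurd hc hx⟩
      obtain ⟨g, hg⟩ := Classical.axiomOfChoice hdecomp'
      have hDcard2 : D.card * 2 ≤ a * (a+1) := by
        have hinj : D.card ≤ Af.sym2.card := by
          apply Finset.card_le_card_of_injOn (fun x => s((g x).1, (g x).2))
          · intro x hx
            obtain ⟨h1, h2, h3⟩ := hg x hx
            exact Finset.mk_mem_sym2_iff.mpr ⟨h1, h2⟩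
          · intro x hx y hy hxy
            rw [Finset.mem_coe] at hx hy
            obtain ⟨hx1, hx2, hx3⟩ := hg x hx
            obtain ⟨hy1, hy2, hy3⟩ := hg y hy
            rcases Sym2.eq_iff.mp hxy with ⟨h1, h2⟩ | ⟨h1, h2⟩ <;> omega
        have hs2 : Af.sym2.card = (a+1).choose 2 := by rw [Finset.card_sym2, hAfcard]
        rw [Nat.choose_two_right, Nat.add_sub_cancel, Nat.mul_comm] at hs2
        have hdvd : a * (a+1) / 2 * 2 = a * (a+1) :=
          Nat.div_mul_cancel (Nat.even_mul_succ_self a).two_dvd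
        have h2 := Nat.mul_le_mul_right 2 hinj
        rw [hs2, hdvd] at h2
        exact h2
      -- every element of (F, F+m] is primitive or in D
      set Pf := (Finset.Ioc F (F+m)).filter (fun x => x ∈ primitives S) with hPf
      have hsplitcard : m ≤ Pf.card + D.card := by
        have hunion : Finset.Ioc F (F+m) = Pf ∪ D := by
          ext x
          rw [hPf, hD, ← Finset.filter_or]
          simp [em]
        have h1 : (Finset.Ioc F (F+m)).card = m := by
          rw [Nat.card_Ioc]; omega
        calc m = (Finset.Ioc F (F+m)).card := h1.symm
          _ = (Pf ∪ D).card := by rw [hunion]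
          _ ≤ Pf.card + D.card := Finset.card_union_le _ _
      -- primitives contain A and Pf, disjointly
      have hPge : a + Pf.card ≤ (primitives S).ncard := by
        have hsub : A ∪ ↑Pf ⊆ primitives S := by
          rintro x (hx | hx)
          · obtain ⟨hx1, hx2⟩ := hx
            rw [Set.mem_Ico] at hx2
            exact hAP ⟨hx1, Set.mem_Ico.mpr ⟨hx2.1, by omega⟩⟩
          · rw [Finset.mem_coe, hPf, Finset.mem_filter] at hx
            exact hx.2
        have hdisj : Disjoint A (↑Pf : Set ℕ) := by
          rw [Set.disjoint_left]
          intro x hxA hxP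
          rw [Finset.mem_coe, hPf, Finset.mem_filter, Finset.mem_Ioc] at hxP
          obtain ⟨-, hx2⟩ := hxA.2
          omega
        calc a + Pf.card = A.ncard + (↑Pf : Set ℕ).ncard := by
              rw [Set.ncard_coe_finset]
          _ = (A ∪ ↑Pf).ncard := (Set.ncard_union_eq hdisj hAfin (Pf.finite_toSet)).symm
          _ ≤ (primitives S).ncard := Set.ncard_le_ncard hsub hPfin
      -- final arithmetic
      have hfin : F + 1 ≤ (a + Pf.card) * (a + 1) := by
        nlinarith [hsplitcard, hDcard2, ha1, hdeep]
      calc F + 1 ≤ (a + Pf.card) * (a + 1) := hfin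
        _ ≤ (primitives S).ncard * (lefts S).ncard := by
            rw [hLcard]
            exact Nat.mul_le_mul_right _ hPge

    · -- depth ≥ 3 case
      -- depth ≥ 3 case : F ≥ 2m
      push_neg at hdeep
      set t := n + 1 with ht
      set k := F / m with hk
      have hk2 : 2 ≤ k := by
        rw [hk]
        exact (Nat.le_div_iff_mul_le (by omega)).mpr (by omega)
      have hkmF : k * m ≤ F := by rw [hk, Nat.mul_comm]; exact Nat.mul_div_le F m
      have hFkm : F < k * m + m := by
        have hmod := Nat.div_add_mod F m
        have hlt : F % m < m := Nat.mod_lt F (by omega)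
        have : m * k + F % m = F := by rw [hk]; exact hmod
        have hcomm : k * m = m * k := Nat.mul_comm k m
        omega
      -- finset of the small primitives block
      set Af := hA_fin.toFinset with hAf
      have hAfcard : Af.card = t := by
        rw [hAf, ← Set.ncard_eq_toFinset_card _ hA_fin, hcardA]
      have hAfmem : ∀ x, x ∈ Af ↔ x ∈ S.carrier ∧ m ≤ x ∧ x < 2*m := by
        intro x
        rw [hAf, Set.Finite.mem_toFinset]
        simp [Set.mem_Ico]
      -- the image of blocks
      set img := (Finset.range (k-1) ×ˢ Af).image (fun p => p.1 * m + p.2) with himg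
      have himgcard : img.card = (k-1) * t := by
        rw [himg, Finset.card_image_of_injOn, Finset.card_product, Finset.card_range, hAfcard]
        rintro ⟨j1, x1⟩ hp1 ⟨j2, x2⟩ hp2 he
        simp only [Finset.mem_coe, Finset.mem_product, Finset.mem_range] at hp1 hp2
        obtain ⟨hj1, hx1⟩ := hp1
        obtain ⟨hj2, hx2⟩ := hp2
        obtain ⟨-, hx1a, hx1b⟩ := (hAfmem x1).mp hx1
        obtain ⟨-, hx2a, hx2b⟩ := (hAfmem x2).mp hx2
        simp only at he
        have hj : j1 = j2 := by
          rcases Nat.lt_trichotomy j1 j2 with hlt | heq | hgt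
          · exfalso
            have : (j1 + 1) * m ≤ j2 * m := Nat.mul_le_mul_right m (by omega)
            rw [Nat.add_mul, Nat.one_mul] at this
            have h2 : j1 * m + x1 < j1 * m + 2 * m := by omega
            omega
          · exact heq
          · exfalso
            have : (j2 + 1) * m ≤ j1 * m := Nat.mul_le_mul_right m (by omega)
            rw [Nat.add_mul, Nat.one_mul] at this
            omega
        subst hj
        have : x1 = x2 := by omega
        simp [this]
      -- elements of img are small and in the carrier
      have himgmem : ∀ y ∈ img, y ∈ S.carrier ∧ m ≤ y ∧ y < k * m := by
        intro y hy
        rw [himg, Finset.mem_image] at hy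
        obtain ⟨⟨j, x⟩, hp, he⟩ := hy
        simp only [Finset.mem_product, Finset.mem_range] at hp
        obtain ⟨hj, hx⟩ := hp
        obtain ⟨hxS, hxa, hxb⟩ := (hAfmem x).mp hx
        simp only at he
        refine ⟨he ▸ S.add_mem (Aux.mul_mem S hmS j) hxS, by omega, ?_⟩
        have h1 : j * m ≤ (k-2) * m := Nat.mul_le_mul_right m (by omega)
        have h2 : (k-2) * m + 2 * m = k * m := by
          rw [← Nat.add_mul]; congr 1; omega
        omega
      -- the explicit subset of lefts
      set Lsub := insert 0 (insert (k*m) img) with hLsub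
      have hkm0 : k * m ≠ 0 := Nat.mul_ne_zero (by omega) (by omega)
      have hkmnotin : k * m ∉ img := by
        intro hc
        have := (himgmem _ hc).2.2
        omega
      have h0notin : (0:ℕ) ∉ insert (k*m) img := by
        intro hc
        rcases Finset.mem_insert.mp hc with hc | hc
        · exact hkm0 hc.symm
        · have := (himgmem _ hc).2.1
          omega
      have hLsubcard : Lsub.card = (k-1) * t + 2 := by
        rw [hLsub, Finset.card_insert_of_notMem h0notin,
          Finset.card_insert_of_notMem hkmnotin, himgcard]
      have hLsubL : ↑Lsub ⊆ lefts S := by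
        intro x hx
        rw [Finset.mem_coe, hLsub] at hx
        rcases Finset.mem_insert.mp hx with rfl | hx
        · exact ⟨S.zero_mem, by simp only [Set.mem_Iio]; omega⟩
        rcases Finset.mem_insert.mp hx with rfl | hx
        · refine ⟨Aux.mul_mem S hmS k, ?_⟩
          simp only [Set.mem_Iio]
          have hne : k * m ≠ F := fun hc => hFgap (hc ▸ Aux.mul_mem S hmS k)
          omega
        · obtain ⟨hxS, hxa, hxb⟩ := himgmem _ hx
          exact ⟨hxS, by simp only [Set.mem_Iio]; omega⟩
      have hLge : (k-1) * t + 2 ≤ (lefts S).ncard := by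
        rw [← hLsubcard, ← Set.ncard_coe_finset]
        exact Set.ncard_le_ncard hLsubL hLfin
      -- final arithmetic
      have htn : 3 * m ≤ t^2 := by
        have : n^2 ≤ t^2 := Nat.pow_le_pow_left (by omega) 2
        omega
      have ht1 : 1 ≤ t := by omega
      have hfin : F + 1 ≤ t * ((k-1) * t + 2) := by
        set k' := k - 1 with hk'
        have hk'1 : 1 ≤ k' := by omega
        have hkk : k = k' + 1 := by omega
        have hF2 : F + 1 ≤ (k' + 1) * m + m := by rw [← hkk]; omega
        have h1 : k' * (3*m) ≤ k' * t^2 := Nat.mul_le_mul_left k' htn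
        have h2 : m ≤ k' * m := Nat.le_mul_of_pos_left m (by omega)
        nlinarith [h1, h2, hF2, ht1, hm2]
      calc F + 1 ≤ t * ((k-1) * t + 2) := hfin
        _ ≤ (primitives S).ncard * (lefts S).ncard := Nat.mul_le_mul hPn hLge

  · -- F < m : lefts = {0}
    have hFm : F < m := by
      rcases Nat.lt_or_ge F m with h' | h'
      · exact h'
      · exfalso
        have : F = m := by omega
        rw [this] at hFgap; exact hFgap hmS
    have hL : lefts S = {0} := by
      ext x
      simp only [lefts, Set.mem_inter_iff, Set.mem_Iio, Set.mem_singleton_iff, ← hF]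
      constructor
      · rintro ⟨hx, hxF⟩
        by_contra hx0
        have := hmle x hx hx0
        omega
      · rintro rfl
        exact ⟨S.zero_mem, by omega⟩
    have hLcard : (lefts S).ncard = 1 := by rw [hL]; exact Set.ncard_singleton 0
    have hsub : Set.Ico m (2*m) ⊆ primitives S := by
      intro x hx
      rw [Set.mem_Ico] at hx
      exact hAP ⟨hFub x (by omega), Set.mem_Ico.mpr hx⟩
    have hPm : m ≤ (primitives S).ncard := by
      have h1 : (Set.Ico m (2*m)).ncard ≤ (primitives S).ncard :=
        Set.ncard_le_ncard hsub hPfin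
      rw [← Finset.coe_Ico, Set.ncard_coe_finset, Nat.card_Ico] at h1
      omega
    rw [hLcard, mul_one]
    omega
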